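/- arXiv:2208.14290 — 3 statements merged into one kernel-verified Lean document; each statement's English description precedes it below -/
import Mathlib

section
/- Soundness and precision of the symbolic pre image: a configuration cf satisfies pre_s(P) if and only if for all configurations cf', cf →^s cf' implies cf' ⊨ P. (I.e., the pre image denotes exactly the configurations all of whose s-successors satisfy P, including configurations with no s-successor.) -/
open scoped NNReal

/-- A PRD automaton, semantically. -/
structure PRD (Q Val E : Type*) where
  shift : Val → ℝ≥0 → Val
  deltaTrans : Set (Q × Set Val × (Val → Val) × Q)
  evTrans : E → Set (Q × Set Val × (Val → Val) × Q)

namespace PRD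

variable {Q Val E : Type*} (A : PRD Q Val E)

/-- One step of the automaton, labeled by an event or a time progression. -/
def step : (Q × Val) → (E ⊕ ℝ≥0) → (Q × Val) → Prop
  | (p, φ), Sum.inl e, (q, φ') =>
      ∃ g up, (p, g, up, q) ∈ A.evTrans e ∧ φ ∈ g ∧ φ' = up φ
  | (p, φ), Sum.inr t, (q, φ') =>
      (∃ g up, (p, g, up, q) ∈ A.deltaTrans ∧
        A.shift φ t ∈ g ∧ φ' = up (A.shift φ t)) ∨
      (t = 0 ∧ q = p ∧ φ' = φ)

/-- The pre image of a condition, built symbolically: conditions assign to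
each state a set of valuations; `σ_{g,up,t}(G)` keeps the valuations `φ`
such that enabledness of `g` after waiting `t` implies the update lands in
`G` (the disjunct `¬g` covers stuck configurations); the meet intersects
these sets over all transitions, and for `t = 0` the stutter step
additionally requires membership in `P` itself. -/
def pre : (E ⊕ ℝ≥0) → (Q → Set Val) → (Q → Set Val)
  | Sum.inl e, P => fun p =>
      {φ | ∀ g up q, (p, g, up, q) ∈ A.evTrans e → φ ∈ g → up φ ∈ P q}
  | Sum.inr t, P => fun p =>
      {φ | ∀ g up q, (p, g, up, q) ∈ A.deltaTrans →
        A.shift φ t ∈ g → up (A.shift φ t) ∈ P q} ∩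
      (if t = 0 then P p else Set.univ)

/-- Soundness and precision of the symbolic pre image: a configuration
satisfies `pre_s(P)` iff all of its `s`-successors satisfy `P` (including
configurations without any `s`-successor). -/
theorem pre_sound_precise (s : E ⊕ ℝ≥0) (P : Q → Set Val) (p : Q) (φ : Val) :
    φ ∈ A.pre s P p ↔
      ∀ cf' : Q × Val, A.step (p, φ) s cf' → cf'.2 ∈ P cf'.1 := by
  cases s with
  | inl e =>
    simp only [pre, Set.mem_setOf_eq]
    constructor
    · rintro h ⟨q, φ'⟩ ⟨g, up, hmem, hg, rfl⟩
      exact h g up q hmem hg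
    · intro h g up q hmem hg
      exact h (q, up φ) ⟨g, up, hmem, hg, rfl⟩
  | inr t =>
    simp only [pre, Set.mem_inter_iff, Set.mem_setOf_eq]
    constructor
    · rintro ⟨h1, h2⟩ ⟨q, φ'⟩ hstep
      rcases hstep with ⟨g, up, hmem, hg, rfl⟩ | ⟨ht, rfl, rfl⟩
      · exact h1 g up q hmem hg
      · simpa [ht] using h2
    · intro h
      refine ⟨fun g up q hmem hg => h (q, up (A.shift φ t)) (Or.inl ⟨g, up, hmem, hg, rfl⟩), ?_⟩
      split
      · next ht => exact h (p, φ) (Or.inr ⟨ht, rfl, rfl⟩)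
      · trivial

end PRD
end

section
/- Precision of the strongest postcondition with precise widening: if the widening ∇ is precise (∇ M = ⋃ M for all argument families M), then validity of {P} w {R} implies sp(P, w) ⊑ R. -/
open scoped NNReal

variable {C E : Type*}

/-- Step sequences along a trace (list of symbols). -/
def Steps (step : C → (E ⊕ ℝ≥0) → C → Prop) : C → List (E ⊕ ℝ≥0) → C → Prop
  | c, [], c' => c = c'
  | c, s :: w, c' => ∃ c'', step c s c'' ∧ Steps step c'' w c'

/-- Trace equivalence: the least equivalence closed under inserting zero time
progressions and splitting a time progression into two summands. -/
inductive TEquiv : List (E ⊕ ℝ≥0) → List (E ⊕ ℝ≥0) → Prop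
  | refl (w) : TEquiv w w
  | symm {w u} : TEquiv w u → TEquiv u w
  | trans {w u v} : TEquiv w u → TEquiv u v → TEquiv w v
  | zero (w1 w2) : TEquiv (w1 ++ w2) (w1 ++ Sum.inr 0 :: w2)
  | split (w1 w2) (t t1 t2 : ℝ≥0) (h : t = t1 + t2) :
      TEquiv (w1 ++ Sum.inr t :: w2) (w1 ++ Sum.inr t1 :: Sum.inr t2 :: w2)

/-- Hoare validity: from every configuration satisfying `P`, every step
sequence along any trace equivalent to `w` ends in a configuration in `R`. -/
def HoareValid (step : C → (E ⊕ ℝ≥0) → C → Prop)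
    (P : Set C) (w : List (E ⊕ ℝ≥0)) (R : Set C) : Prop :=
  ∀ cf ∈ P, ∀ u, TEquiv u w → ∀ cf', Steps step cf u cf' → cf' ∈ R

/-- Semantic post image for one symbol. -/
def postSem (step : C → (E ⊕ ℝ≥0) → C → Prop) (s : E ⊕ ℝ≥0) (P : Set C) :
    Set C :=
  {cf' | ∃ cf ∈ P, step cf s cf'}

/-- Iterated post image along a list of time progressions. -/
def iterPost (step : C → (E ⊕ ℝ≥0) → C → Prop) (l : List ℝ≥0) (P : Set C) :
    Set C :=
  l.foldl (fun acc t => postSem step (Sum.inr t) acc) P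

/-- Strongest postcondition for one symbol: post image for events; for time
progressions, the (precise) widening, i.e. the union over all finite
decompositions of the time progression, of the iterated post images. -/
def spSym (step : C → (E ⊕ ℝ≥0) → C → Prop) : (E ⊕ ℝ≥0) → Set C → Set C
  | Sum.inl e, P => postSem step (Sum.inl e) P
  | Sum.inr t, P => ⋃ (l : List ℝ≥0) (_ : l.sum = t), iterPost step l P

/-- Strongest postcondition of a trace, by composition. -/
def sp (step : C → (E ⊕ ℝ≥0) → C → Prop) (P : Set C) (w : List (E ⊕ ℝ≥0)) :
    Set C :=
  w.foldl (fun acc s => spSym step s acc) P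

/-- Semantic pre image for one symbol: all `s`-successors lie in `R`. -/
def preSem (step : C → (E ⊕ ℝ≥0) → C → Prop) (s : E ⊕ ℝ≥0) (R : Set C) :
    Set C :=
  {cf | ∀ cf', step cf s cf' → cf' ∈ R}

/-- Iterated pre image along a list of time progressions. -/
def iterPre (step : C → (E ⊕ ℝ≥0) → C → Prop) (l : List ℝ≥0) (R : Set C) :
    Set C :=
  l.foldr (fun t acc => preSem step (Sum.inr t) acc) R

/-- Weakest precondition for one symbol: pre image for events; for time
progressions, the (precise) narrowing, i.e. the intersection over all finite
decompositions of the time progression, of the iterated pre images. -/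
def wpSym (step : C → (E ⊕ ℝ≥0) → C → Prop) : (E ⊕ ℝ≥0) → Set C → Set C
  | Sum.inl e, R => preSem step (Sum.inl e) R
  | Sum.inr t, R => ⋂ (l : List ℝ≥0) (_ : l.sum = t), iterPre step l R

/-- Weakest precondition of a trace, by right-to-left composition. -/
def wp (step : C → (E ⊕ ℝ≥0) → C → Prop) (w : List (E ⊕ ℝ≥0)) (R : Set C) :
    Set C :=
  w.foldr (fun s acc => wpSym step s acc) R

lemma TEquiv.context {u v : List (E ⊕ ℝ≥0)} (x y : List (E ⊕ ℝ≥0))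
    (h : TEquiv u v) : TEquiv (x ++ u ++ y) (x ++ v ++ y) := by
  induction h with
  | refl => exact .refl _
  | symm _ ih => exact .symm ih
  | trans _ _ ih1 ih2 => exact .trans ih1 ih2
  | zero w1 w2 => simpa [List.append_assoc] using TEquiv.zero (x ++ w1) (w2 ++ y)
  | split w1 w2 t t1 t2 ht =>
      simpa [List.append_assoc] using TEquiv.split (x ++ w1) (w2 ++ y) t t1 t2 ht

lemma TEquiv.append_right {u v : List (E ⊕ ℝ≥0)} (c : List (E ⊕ ℝ≥0))
    (h : TEquiv u v) : TEquiv (u ++ c) (v ++ c) := by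
  simpa using h.context [] c

lemma TEquiv.append_left {u v : List (E ⊕ ℝ≥0)} (c : List (E ⊕ ℝ≥0))
    (h : TEquiv u v) : TEquiv (c ++ u) (c ++ v) := by
  simpa using h.context c []

lemma tequiv_decomp (l : List ℝ≥0) :
    TEquiv (l.map (Sum.inr : ℝ≥0 → E ⊕ ℝ≥0)) [Sum.inr l.sum] := by
  induction l with
  | nil =>
      exact (by simpa using TEquiv.zero ([] : List (E ⊕ ℝ≥0)) [])
  | cons t l ih =>
      refine TEquiv.trans ?_ (TEquiv.symm
        (by simpa using TEquiv.split ([] : List (E ⊕ ℝ≥0)) [] (t + l.sum) t l.sum rfl))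
      simpa using ih.append_left [Sum.inr t]

lemma steps_append (step : C → (E ⊕ ℝ≥0) → C → Prop) :
    ∀ (u v : List (E ⊕ ℝ≥0)) (c c' : C),
      Steps step c (u ++ v) c' ↔ ∃ c'', Steps step c u c'' ∧ Steps step c'' v c' := by
  intro u
  induction u with
  | nil => intro v c c'; simp [Steps]
  | cons s u ih =>
      intro v c c'
      constructor
      · rintro ⟨c1, hs, hrest⟩
        obtain ⟨c2, h1, h2⟩ := (ih v c1 c').1 hrest
        exact ⟨c2, ⟨c1, hs, h1⟩, h2⟩
      · rintro ⟨c2, ⟨c1, hs, h1⟩, h2⟩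
        exact ⟨c1, hs, (ih v c1 c').2 ⟨c2, h1, h2⟩⟩

lemma iterPost_reach (step : C → (E ⊕ ℝ≥0) → C → Prop) :
    ∀ (l : List ℝ≥0) (Q : Set C) (cf' : C),
      cf' ∈ iterPost step l Q ↔
        ∃ cf ∈ Q, Steps step cf (l.map Sum.inr) cf' := by
  intro l
  induction l with
  | nil => intro Q cf'; simp [iterPost, Steps]
  | cons t l ih =>
      intro Q cf'
      have : iterPost step (t :: l) Q = iterPost step l (postSem step (Sum.inr t) Q) := rfl
      rw [this, ih]
      constructor
      · rintro ⟨cf1, ⟨cf, hcf, hstep⟩, hsteps⟩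
        exact ⟨cf, hcf, cf1, hstep, hsteps⟩
      · rintro ⟨cf, hcf, cf1, hstep, hsteps⟩
        exact ⟨cf1, ⟨cf, hcf, hstep⟩, hsteps⟩

lemma spSym_reach (step : C → (E ⊕ ℝ≥0) → C → Prop) (s : E ⊕ ℝ≥0) (Q : Set C)
    (cf' : C) (h : cf' ∈ spSym step s Q) :
    ∃ v, TEquiv v [s] ∧ ∃ cf ∈ Q, Steps step cf v cf' := by
  cases s with
  | inl e =>
      obtain ⟨cf, hcf, hstep⟩ := h
      exact ⟨[Sum.inl e], TEquiv.refl _, cf, hcf, cf', hstep, rfl⟩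
  | inr t =>
      simp only [spSym, Set.mem_iUnion] at h
      obtain ⟨l, hl, hmem⟩ := h
      obtain ⟨cf, hcf, hsteps⟩ := (iterPost_reach step l Q cf').1 hmem
      exact ⟨l.map Sum.inr, hl ▸ tequiv_decomp l, cf, hcf, hsteps⟩

lemma sp_reach (step : C → (E ⊕ ℝ≥0) → C → Prop) :
    ∀ (w : List (E ⊕ ℝ≥0)) (Q : Set C) (cf' : C), cf' ∈ sp step Q w →
      ∃ u, TEquiv u w ∧ ∃ cf ∈ Q, Steps step cf u cf' := by
  intro w
  induction w with
  | nil => intro Q cf' h; exact ⟨[], TEquiv.refl _, cf', h, rfl⟩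
  | cons s w ih =>
      intro Q cf' h
      have h' : cf' ∈ sp step (spSym step s Q) w := h
      obtain ⟨u, hu, cf1, hcf1, hsteps⟩ := ih (spSym step s Q) cf' h'
      obtain ⟨v, hv, cf, hcf, hsteps'⟩ := spSym_reach step s Q cf1 hcf1
      refine ⟨v ++ u, ?_, cf, hcf, (steps_append step v u cf cf').2 ⟨cf1, hsteps', hsteps⟩⟩
      exact TEquiv.trans (hv.append_right u) (by simpa using hu.append_left [s])

/-- Precision of the strongest postcondition with the precise widening
(`∇ M = ⋃ M`, as used in the definition of `sp`): validity of `{P} w {R}`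
implies `sp(P, w) ⊑ R`. -/
theorem sp_precise (step : C → (E ⊕ ℝ≥0) → C → Prop)
    (P R : Set C) (w : List (E ⊕ ℝ≥0))
    (h : HoareValid step P w R) : sp step P w ⊆ R := by
  intro cf' hsp
  obtain ⟨u, hequiv, cf, hcf, hsteps⟩ := sp_reach step w P cf' hsp
  exact h cf hcf u hequiv cf' hsteps
end

section
/- Precision of the weakest precondition with precise narrowing: if ∇̄ is precise (∇̄ M = ⊓ M, the meet/intersection, for all M), then validity of {P} w {R} implies P ⊑ wp(w, R). -/
open scoped NNReal

variable {C E : Type*}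

lemma TEquiv.cons (s : E ⊕ ℝ≥0) {w u : List (E ⊕ ℝ≥0)} (h : TEquiv w u) :
    TEquiv (s :: w) (s :: u) := by
  induction h with
  | refl w => exact .refl _
  | symm _ ih => exact ih.symm
  | trans _ _ ih1 ih2 => exact ih1.trans ih2
  | zero w1 w2 => exact TEquiv.zero (s :: w1) w2
  | split w1 w2 t t1 t2 ht => exact TEquiv.split (s :: w1) w2 t t1 t2 ht

lemma tequiv_map_inr (l : List ℝ≥0) (t : ℝ≥0) (ht : l.sum = t)
    (u : List (E ⊕ ℝ≥0)) :
    TEquiv (l.map Sum.inr ++ u) (Sum.inr t :: u) := by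
  induction l generalizing t u with
  | nil =>
    simp at ht
    subst ht
    exact TEquiv.zero ([] : List (E ⊕ ℝ≥0)) u
  | cons a l ih =>
    have h1 : TEquiv (Sum.inr a :: l.map Sum.inr ++ u)
        (Sum.inr a :: Sum.inr l.sum :: u) := (ih l.sum rfl u).cons _
    have h2 : TEquiv (([] : List (E ⊕ ℝ≥0)) ++ Sum.inr t :: u)
        ([] ++ Sum.inr a :: Sum.inr l.sum :: u) :=
      TEquiv.split [] u t a l.sum (by simp only [List.sum_cons] at ht; exact ht.symm)
    exact h1.trans h2.symm

lemma steps_append_s15 {step : C → (E ⊕ ℝ≥0) → C → Prop} {a b : List (E ⊕ ℝ≥0)}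
    {c m c' : C} (h1 : Steps step c a m) (h2 : Steps step m b c') :
    Steps step c (a ++ b) c' := by
  induction a generalizing c with
  | nil => cases h1; exact h2
  | cons s a ih =>
    obtain ⟨c'', hs, hrest⟩ := h1
    exact ⟨c'', hs, ih hrest⟩

lemma mem_iterPre {step : C → (E ⊕ ℝ≥0) → C → Prop} {l : List ℝ≥0}
    {S : Set C} {cf : C} :
    cf ∈ iterPre step l S ↔
      ∀ cf', Steps step cf (l.map Sum.inr) cf' → cf' ∈ S := by
  induction l generalizing cf with
  | nil =>
    simp only [iterPre, List.foldr, List.map]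
    constructor
    · rintro h cf' rfl; exact h
    · intro h; exact h cf rfl
  | cons a l ih =>
    constructor
    · rintro h cf' ⟨c'', hs, hrest⟩
      exact (ih.mp (h c'' hs)) cf' hrest
    · intro h c'' hs
      exact ih.mpr fun cf' hrest => h cf' ⟨c'', hs, hrest⟩

lemma wp_of_runs {step : C → (E ⊕ ℝ≥0) → C → Prop} {R : Set C}
    (w : List (E ⊕ ℝ≥0)) (cf : C)
    (h : ∀ u, TEquiv u w → ∀ cf', Steps step cf u cf' → cf' ∈ R) :
    cf ∈ wp step w R := by
  induction w generalizing cf with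
  | nil => exact h [] (.refl _) cf rfl
  | cons s w ih =>
    cases s with
    | inl e =>
      intro cf'' hs
      exact ih cf'' fun u hu cf' hst =>
        h (Sum.inl e :: u) (hu.cons _) cf' ⟨cf'', hs, hst⟩
    | inr t =>
      simp only [wp, List.foldr, wpSym, Set.mem_iInter]
      intro l hl
      refine mem_iterPre.mpr fun cf'' hst => ih cf'' fun u hu cf' hst' => ?_
      refine h (l.map Sum.inr ++ u) ?_ cf' (steps_append_s15 hst hst')
      exact ((tequiv_map_inr l t hl u).trans (hu.cons _))

/-- Precision of the weakest precondition with the precise narrowing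
(`∇̄ M = ⊓ M`, as used in the definition of `wp`): validity of `{P} w {R}`
implies `P ⊑ wp(w, R)`. -/
theorem wp_precise (step : C → (E ⊕ ℝ≥0) → C → Prop)
    (P R : Set C) (w : List (E ⊕ ℝ≥0))
    (h : HoareValid step P w R) : P ⊆ wp step w R := by
  exact fun cf hcf => wp_of_runs w cf fun u hu cf' hst => h cf hcf u hu cf' hst
end
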